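/- Let C be a linear code of length n over F_{q^m}. Then the dual (over F_q) of the subfield subcode C ∩ F_q^n equals the trace code Tr_{F_{q^m}/F_q}(C^⊥), where the trace map is applied componentwise. -/

import Mathlib

/-- The dual of a set of words, with respect to the standard bilinear form. -/
def dualSet (F : Type*) [Field F] {ι : Type*} [Fintype ι] (S : Set (ι → F)) : Set (ι → F) :=
  {u | ∀ c ∈ S, ∑ i, u i * c i = 0}

/-- The standard (dot product) bilinear form on `ι → F`. -/
noncomputable def dotForm (F : Type*) [Field F] (ι : Type*) [Fintype ι] :
    LinearMap.BilinForm F (ι → F) :=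
  LinearMap.mk₂ F (fun u c => ∑ i, u i * c i)
    (fun u v c => by simp [add_mul, Finset.sum_add_distrib])
    (fun a u c => by simp [Finset.mul_sum, mul_assoc])
    (fun u c d => by simp [mul_add, Finset.sum_add_distrib])
    (fun a u c => by simp [Finset.mul_sum]; exact Finset.sum_congr rfl fun i _ => by ring)

lemma dotForm_apply {F : Type*} [Field F] {ι : Type*} [Fintype ι] (u c : ι → F) :
    dotForm F ι u c = ∑ i, u i * c i := rfl

lemma dotForm_isRefl (F : Type*) [Field F] (ι : Type*) [Fintype ι] :
    (dotForm F ι).IsRefl := by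
  intro u c h
  simpa [dotForm_apply, mul_comm] using h

lemma dotForm_nondegenerate (F : Type*) [Field F] (ι : Type*) [Fintype ι] [DecidableEq ι] :
    (dotForm F ι).Nondegenerate := by
  refine (LinearMap.IsRefl.nondegenerate_iff_separatingLeft (B := dotForm F ι) (dotForm_isRefl F ι)).mpr ?_
  intro u h
  funext j
  have := h (Pi.single j 1)
  simpa [dotForm_apply, Pi.single_apply, Finset.sum_ite_eq'] using this

lemma dualSet_eq_orthogonal {F : Type*} [Field F] {ι : Type*} [Fintype ι]
    (W : Submodule F (ι → F)) :
    dualSet F (W : Set (ι → F)) = ((dotForm F ι).orthogonal W : Set (ι → F)) := by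
  ext u
  constructor
  · intro h c hc
    have := h c hc
    simpa [LinearMap.BilinForm.IsOrtho, dotForm_apply, mul_comm] using this
  · intro h c hc
    have := h c hc
    simpa [LinearMap.BilinForm.IsOrtho, dotForm_apply, mul_comm] using this

lemma trace_mul_algebraMap {K L : Type*} [Field K] [Field L] [Algebra K L] (x : L) (a : K) :
    Algebra.trace K L (x * algebraMap K L a) = Algebra.trace K L x * a := by
  rw [mul_comm, ← Algebra.smul_def, map_smul, smul_eq_mul, mul_comm]

/-- **Delsarte's theorem**: the dual (over `K`) of the subfield subcode `C ∩ K^n` of an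
`L`-linear code `C ⊆ L^n` is the componentwise trace of the dual of `C`. -/
theorem delsarte {K L : Type*} [Field K] [Fintype K] [Field L] [Fintype L] [Algebra K L]
    {n : ℕ} (Co : Submodule L (Fin n → L)) :
    dualSet K {c : Fin n → K | (fun i => algebraMap K L (c i)) ∈ Co} =
      {u : Fin n → K | ∃ v ∈ dualSet L (Co : Set (Fin n → L)),
        u = fun i => Algebra.trace K L (v i)} := by
  have : Module.Finite K L := Module.Finite.of_finite
  have : Algebra.IsSeparable K L := inferInstance
  -- the subfield subcode as a `K`-submodule
  set emb : (Fin n → K) →ₗ[K] (Fin n → L) :=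
    LinearMap.compLeft (Algebra.linearMap K L) (Fin n) with hemb
  set W : Submodule K (Fin n → K) := Submodule.comap emb (Co.restrictScalars K) with hW
  -- the trace code as a `K`-submodule
  set D : Submodule L (Fin n → L) := (dotForm L (Fin n)).orthogonal Co with hD
  set trPi : (Fin n → L) →ₗ[K] (Fin n → K) :=
    LinearMap.compLeft (Algebra.trace K L) (Fin n) with htrPi
  set T : Submodule K (Fin n → K) := Submodule.map trPi (D.restrictScalars K) with hT
  have hsetL : dualSet L (Co : Set (Fin n → L)) = (D : Set (Fin n → L)) :=
    dualSet_eq_orthogonal Co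
  -- key : the dot-form orthogonal of T equals W
  have key : (dotForm K (Fin n)).orthogonal T = W := by
    ext c
    constructor
    · intro hc
      -- c ⊥ T implies emb c ∈ Co (via double orthogonality over L)
      have hCo : Co = (dotForm L (Fin n)).orthogonal D :=
        ((dotForm L (Fin n)).orthogonal_orthogonal (dotForm_nondegenerate L (Fin n))
          (dotForm_isRefl L (Fin n)) Co).symm
      have : emb c ∈ (dotForm L (Fin n)).orthogonal D := by
        intro v hv
        -- show ∑ v i * algebraMap (c i) = 0 using nondegeneracy of the trace form
        have hx : ∀ α : L, Algebra.traceForm K L (dotForm L (Fin n) v (emb c)) α = 0 := by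
          intro α
          have hαv : α • v ∈ D := Submodule.smul_mem D α hv
          have hT : trPi (α • v) ∈ T :=
            Submodule.mem_map_of_mem (by simpa using hαv)
          have h0 := hc _ hT
          have : ∑ i, Algebra.trace K L ((α • v) i) * c i = 0 := by
            simpa [dotForm_apply, htrPi, LinearMap.compLeft_apply] using h0
          have htr : Algebra.trace K L (∑ i, (α • v) i * algebraMap K L (c i)) = 0 := by
            rw [map_sum]
            rw [← this]
            refine Finset.sum_congr rfl fun i _ => ?_
            rw [trace_mul_algebraMap]
          have hrw : (dotForm L (Fin n)) v (emb c) * α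
              = ∑ i, (α • v) i * algebraMap K L (c i) := by
            simp [dotForm_apply, Finset.sum_mul, hemb, LinearMap.compLeft_apply]
            refine Finset.sum_congr rfl fun i _ => ?_
            ring
          simpa [Algebra.traceForm_apply, hrw] using htr
        exact (traceForm_nondegenerate K L).1 _ hx
      rw [hW]
      simp only [Submodule.mem_comap, Submodule.restrictScalars_mem]
      rw [hCo]
      exact this
    · intro hc u hu
      -- easy direction: traces of dual words are orthogonal to subfield subcode words
      obtain ⟨v, hv, rfl⟩ := hu
      have hvD : v ∈ D := by simpa using hv
      have h0 : dotForm L (Fin n) v (emb c) = 0 :=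
        (dotForm_isRefl L (Fin n)) _ _ (hvD (emb c) (by simpa [hW] using hc))
      apply (dotForm_isRefl K (Fin n))
      have : ∑ i, Algebra.trace K L (v i) * c i = 0 := by
        have htr := congrArg (Algebra.trace K L) h0
        rw [map_zero, dotForm_apply, map_sum] at htr
        rw [← htr]
        refine Finset.sum_congr rfl fun i _ => ?_
        have he : emb c i = algebraMap K L (c i) := rfl
        rw [he, trace_mul_algebraMap]
      simpa [dotForm_apply, htrPi, LinearMap.compLeft_apply, hemb, mul_comm] using this
  -- conclude by double orthogonality over K
  have final : (dotForm K (Fin n)).orthogonal W = T := by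
    rw [← key, (dotForm K (Fin n)).orthogonal_orthogonal (dotForm_nondegenerate K (Fin n))
      (dotForm_isRefl K (Fin n))]
  have hLHS : {c : Fin n → K | (fun i => algebraMap K L (c i)) ∈ Co} = (W : Set (Fin n → K)) := by
    ext c; simp [hW, hemb, LinearMap.compLeft, Algebra.linearMap_apply, Function.comp_def]
  rw [hLHS, dualSet_eq_orthogonal, final]
  ext u
  simp only [SetLike.mem_coe, hT, Submodule.mem_map, Submodule.restrictScalars_mem, Set.mem_setOf_eq]
  constructor
  · rintro ⟨v, hv, rfl⟩
    exact ⟨v, by simpa [hsetL] using hv, by funext i; simp [htrPi, LinearMap.compLeft_apply]⟩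
  · rintro ⟨v, hv, rfl⟩
    exact ⟨v, by simpa [hsetL] using hv, by funext i; simp [htrPi, LinearMap.compLeft_apply]⟩
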